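/- Let K be a finite field of characteristic p ≠ 2, 3, f ∈ K[x] a cubic polynomial with critical points γ₁, γ₂, and g ∈ K[x] such that g ∘ f^{n-1} is irreducible for some n ≥ 1. If (-3)^{deg(g)} · g(f^n(γ₁)) · g(f^n(γ₂)) is not a square in K, then g ∘ f^n factors into exactly two irreducible polynomials, one of degree deg(g ∘ f^{n-1}) and one of degree 2·deg(g ∘ f^{n-1}). -/

import Mathlib

open Polynomial

/-- `iterComp f n` is the `n`-fold composition `f ∘ f ∘ ⋯ ∘ f` (with `f⁰ = X`). -/
noncomputable def iterComp {K : Type*} [Field K] (f : Polynomial K) : ℕ → Polynomial K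
  | 0 => Polynomial.X
  | n + 1 => (iterComp f n).comp f

section AuxLemmas

open IntermediateField

lemma disc_identity {R : Type*} [CommRing R] (p q u v w : R)
    (h1 : 3*p + 3*q = 2*(u+v+w)) (h2 : 3*(p*q) = u*v + u*w + v*w) :
    ((u-v)*(u-w)*(v-w))^2 = -27 * ((p-u)*(p-v)*(p-w)) * ((q-u)*(q-v)*(q-w)) := by
  linear_combination ((2)*u*v*w^3 + (-5)*u*v^2*w^2 + (2)*u*v^3*w + (-5)*u^2*v*w^2 + (-5)*u^2*v^2*w + (2)*u^3*v*w + (-1)*q*v*w^3 + (3)*q*v^2*w^2 + (-1)*q*v^3*w + (-1)*q*u*w^3 + (8)*q*u*v*w^2 + (8)*q*u*v^2*w + (-1)*q*u*v^3 + (3)*q*u^2*w^2 + (8)*q*u^2*v*w + (3)*q*u^2*v^2 + (-1)*q*u^3*w + (-1)*q*u^3*v + (-2)*q^2*v*w^2 + (-2)*q^2*v^2*w + (-2)*q^2*u*w^2 + (-15)*q^2*u*v*w + (-2)*q^2*u*v^2 + (-2)*q^2*u^2*w + (-2)*q^2*u^2*v + (3)*q^3*v*w + (3)*q^3*u*w +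 (3)*q^3*u*v + (3)*p*u*v*w^2 + (3)*p*u*v^2*w + (3)*p*u^2*v*w + (-3)*p*q*v*w^2 + (-3)*p*q*v^2*w + (-3)*p*q*u*w^2 + (-3)*p*q*u*v^2 + (-3)*p*q*u^2*w + (-3)*p*q*u^2*v + (3)*p*q^2*w^2 + (-3)*p*q^2*v*w + (3)*p*q^2*v^2 + (-3)*p*q^2*u*w + (-3)*p*q^2*u*v + (3)*p*q^2*u^2 + (6)*p*q^3*w + (6)*p*q^3*v + (6)*p*q^3*u + (-9)*p*q^4 + (-9)*p^2*u*v*w + (9)*p^2*q*v*w + (9)*p^2*q*u*w + (9)*p^2*q*u*v + (-9)*p^2*q^2*w + (-9)*p^2*q^2*v + (-9)*p^2*q^2*u + (9)*p^2*q^3)*h1 + ((-1)*v*w^3 + (2)*v^2*w^2 + (-1)*v^3*w + (-1)*u*w^3 + (3)*u*v*w^2 + (3)*u*v^2*w + (-1)*u*v^3 + (2)*u^2*w^2 + (3)*u^2*v*w + (2)*u^2*v^2 + (-1)*u^3*w + (-1)*u^3*v + (2)*q*w^3 + (-4)*q*v*w^2 + (-4)*q*v^2*w + (2)*q*v^3 +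 (-4)*q*u*w^2 + (-18)*q*u*v*w + (-4)*q*u*v^2 + (-4)*q*u^2*w + (-4)*q*u^2*v + (2)*q*u^3 + (1)*q^2*w^2 + (17)*q^2*v*w + (1)*q^2*v^2 + (17)*q^2*u*w + (17)*q^2*u*v + (1)*q^2*u^2 + (-12)*q^3*w + (-12)*q^3*v + (-12)*q^3*u + (9)*q^4)*h2

lemma aux_geom (q : ℕ) (hq : 1 ≤ q) (m : ℕ) :
    1 + (q - 1) * (∑ i ∈ Finset.range m, q ^ i) = q ^ m := by
  obtain ⟨q', rfl⟩ : ∃ q', q = q' + 1 := ⟨q - 1, by omega⟩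
  induction m with
  | zero => simp
  | succ k ih =>
    rw [Finset.sum_range_succ, Nat.mul_add, ← Nat.add_assoc, ih, pow_succ]
    simp only [Nat.add_sub_cancel]
    ring

lemma aux_pow_mem {K E : Type*} [Field K] [Fintype K] [Field E] [Algebra K E]
    {x y : E} (hx : IsIntegral K x) (hy : y ∈ IntermediateField.adjoin K {x}) :
    y ^ Fintype.card K ^ (minpoly K x).natDegree = y := by
  haveI := adjoin.finiteDimensional hx
  haveI : Finite (adjoin K {x}) := Module.finite_of_finite K
  haveI : Fintype (adjoin K {x}) := Fintype.ofFinite _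
  have hcard : Fintype.card (adjoin K {x}) = Fintype.card K ^ (minpoly K x).natDegree := by
    rw [Module.card_eq_pow_finrank (K := K), adjoin.finrank hx]
  have h := FiniteField.pow_card (⟨y, hy⟩ : adjoin K {x})
  rw [hcard] at h
  have := congrArg (algebraMap (adjoin K {x}) E) h
  rwa [map_pow] at this

lemma aux_deg_le {K E : Type*} [Field K] [Fintype K] [Field E] [Algebra K E]
    {x : E} (hx : IsIntegral K x) {j : ℕ} (hj : 1 ≤ j)
    (hxj : x ^ Fintype.card K ^ j = x) : (minpoly K x).natDegree ≤ j := by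
  classical
  set q := Fintype.card K with hqdef
  have hq1 : 1 < q := Fintype.one_lt_card
  obtain ⟨p, hp⟩ := CharP.exists K
  haveI := hp
  have hpp : p.Prime := CharP.char_is_prime K p
  obtain ⟨s, hps, hqs⟩ := FiniteField.card K p
  haveI : CharP E p := charP_of_injective_algebraMap (algebraMap K E).injective p
  haveI : ExpChar E p := ExpChar.prime hpp
  set Φ := iterateFrobenius E p (s * j) with hΦdef
  have hΦ : ∀ y : E, Φ y = y ^ q ^ j := by
    intro y
    rw [hΦdef, iterateFrobenius_def, hqdef, hqs, ← pow_mul]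
  let S : IntermediateField K E :=
  { carrier := {y | Φ y = y}
    mul_mem' := fun ha hb => by
      simp only [Set.mem_setOf_eq, map_mul] at *; rw [ha, hb]
    one_mem' := map_one Φ
    add_mem' := fun ha hb => by
      simp only [Set.mem_setOf_eq, map_add] at *; rw [ha, hb]
    zero_mem' := map_zero Φ
    algebraMap_mem' := fun r => by
      show Φ _ = _
      rw [hΦ, ← map_pow, FiniteField.pow_card_pow]
    inv_mem' := fun y hy => by
      show Φ y⁻¹ = y⁻¹
      rw [map_inv₀]
      show (Φ y)⁻¹ = y⁻¹
      rw [hy] }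
  have hle : adjoin K {x} ≤ S := by
    rw [adjoin_simple_le_iff]
    show Φ x = x
    rw [hΦ, hxj]
  have hN : 1 < q ^ j := Nat.one_lt_pow (by omega) hq1
  have hdegX : ((X : E[X]) ^ (q ^ j)).natDegree = q ^ j := natDegree_X_pow _
  have hdeg : ((X : E[X]) ^ q ^ j - X).natDegree = q ^ j := by
    rw [natDegree_sub_eq_left_of_natDegree_lt, hdegX]
    rw [hdegX, natDegree_X]
    omega
  have hne0 : ((X : E[X]) ^ q ^ j - X) ≠ 0 := by
    intro h
    rw [h, natDegree_zero] at hdeg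
    omega
  have hTsub : (S : Set E) ⊆ ↑(((X : E[X]) ^ q ^ j - X).roots.toFinset) := by
    intro y hy
    have hy' : Φ y = y := hy
    rw [hΦ] at hy'
    simp only [Finset.coe_sort_coe, Multiset.mem_toFinset, Finset.mem_coe, mem_roots, hne0,
      ne_eq, not_false_eq_true, true_and, IsRoot.def, eval_sub, eval_pow, eval_X]
    rw [hy', sub_self]
  have hScard : Nat.card (S : Set E) ≤ q ^ j := by
    have h1 : Nat.card (S : Set E) ≤ Nat.card ↑((((X : E[X]) ^ q ^ j - X).roots.toFinset : Finset E) : Set E) :=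
      Nat.card_mono (Finset.finite_toSet _) hTsub
    have h2 : Nat.card ↑((((X : E[X]) ^ q ^ j - X).roots.toFinset : Finset E) : Set E)
        = (((X : E[X]) ^ q ^ j - X).roots.toFinset).card := by
      rw [Nat.card_eq_card_finite_toFinset (Finset.finite_toSet _)]; simp
    have h3 : (((X : E[X]) ^ q ^ j - X).roots.toFinset).card
        ≤ Multiset.card (((X : E[X]) ^ q ^ j - X).roots) := Multiset.toFinset_card_le _
    have h4 := Polynomial.card_roots' ((X : E[X]) ^ q ^ j - X)
    omega
  haveI := adjoin.finiteDimensional hx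
  haveI : Finite (adjoin K {x}) := Module.finite_of_finite K
  haveI : Fintype (adjoin K {x}) := Fintype.ofFinite _
  have hcard : Fintype.card (adjoin K {x}) = q ^ (minpoly K x).natDegree := by
    rw [Module.card_eq_pow_finrank (K := K), adjoin.finrank hx]
  have hmono : Nat.card ((adjoin K {x} : IntermediateField K E) : Set E) ≤ Nat.card (S : Set E) := by
    apply Nat.card_mono
    · exact Set.Finite.subset (Finset.finite_toSet _) hTsub
    · exact hle
  have hEcard : Nat.card ((adjoin K {x} : IntermediateField K E) : Set E)
      = q ^ (minpoly K x).natDegree := by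
    rw [Nat.card_eq_fintype_card]
    exact hcard
  rw [hEcard] at hmono
  have : q ^ (minpoly K x).natDegree ≤ q ^ j := le_trans hmono hScard
  exact (Nat.pow_le_pow_iff_right hq1).mp this

lemma aux_pow_iff {K E : Type*} [Field K] [Fintype K] [Field E] [Algebra K E]
    {x : E} (hx : IsIntegral K x) (j : ℕ) :
    x ^ Fintype.card K ^ j = x ↔ (minpoly K x).natDegree ∣ j := by
  set q := Fintype.card K
  set e := (minpoly K x).natDegree with he_def
  have he : 0 < e := minpoly.natDegree_pos hx
  have base : x ^ q ^ e = x := aux_pow_mem hx (mem_adjoin_simple_self K x)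
  have step : ∀ k, x ^ q ^ (e * k) = x := by
    intro k
    induction k with
    | zero => simp
    | succ k ih =>
      rw [Nat.mul_succ, pow_add, pow_mul, ih]
      exact base
  constructor
  · intro hxj
    have hdecomp : j = e * (j / e) + j % e := (Nat.div_add_mod j e).symm
    have hxr : x ^ q ^ (j % e) = x := by
      have : x ^ q ^ (e * (j / e) + j % e) = x := by rw [← hdecomp]; exact hxj
      rw [pow_add, pow_mul, step (j / e)] at this
      exact this
    by_cases hr : j % e = 0
    · exact Nat.dvd_of_mod_eq_zero hr
    · have := aux_deg_le hx (by omega) hxr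
      have := Nat.mod_lt j he
      omega
  · rintro ⟨k, rfl⟩
    exact step k

end AuxLemmas

/-- if `g ∘ f^{n-1}` is irreducible and
`(-3)^{deg g} · g(fⁿ(γ₁)) · g(fⁿ(γ₂))` is not a square in the finite field `K`
(of characteristic `≠ 2, 3`), then `g ∘ fⁿ` factors into exactly two
irreducibles, of degrees `deg(g ∘ f^{n-1})` and `2·deg(g ∘ f^{n-1})`. -/
theorem stmt_4 {K : Type*} [Field K] [Fintype K]
    (h2 : (2 : K) ≠ 0) (h3 : (3 : K) ≠ 0)
    (a b c d γ₁ γ₂ : K) (ha : a ≠ 0)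
    (f : Polynomial K) (hf : f = C a * X ^ 3 + C b * X ^ 2 + C c * X + C d)
    (hcrit : f.derivative = C (3 * a) * (X - C γ₁) * (X - C γ₂))
    (g : Polynomial K) (n : ℕ) (hn : 1 ≤ n)
    (hirr : Irreducible (g.comp (iterComp f (n - 1))))
    (hns : ¬ IsSquare ((-3 : K) ^ g.natDegree *
      g.eval ((iterComp f n).eval γ₁) * g.eval ((iterComp f n).eval γ₂))) :
    ∃ h₁ h₂ : Polynomial K, Irreducible h₁ ∧ Irreducible h₂ ∧
      g.comp (iterComp f n) = h₁ * h₂ ∧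
      h₁.natDegree = (g.comp (iterComp f (n - 1))).natDegree ∧
      h₂.natDegree = 2 * (g.comp (iterComp f (n - 1))).natDegree := by
  classical
  set G := g.comp (iterComp f (n - 1)) with hGdef
  set m := G.natDegree with hmdef
  set q := Fintype.card K with hqdef
  -- basic characteristic facts
  have hchar2 : ringChar K ≠ 2 := by
    intro h
    apply h2
    have := ringChar.Nat.cast_ringChar (R := K)
    rw [h] at this
    exact_mod_cast this
  have hq1 : 1 < q := Fintype.one_lt_card
  have hqodd : q % 2 = 1 := FiniteField.odd_card_of_char_ne_two hchar2
  have h3' : (-3 : K) ≠ 0 := neg_ne_zero.mpr h3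
  -- degree facts
  have hdf : f.natDegree = 3 := by rw [hf]; exact natDegree_cubic ha
  have hdeg_iter : ∀ k, (iterComp f k).natDegree = 3 ^ k := by
    intro k
    induction k with
    | zero => simp [iterComp]
    | succ k ih =>
      show ((iterComp f k).comp f).natDegree = _
      rw [natDegree_comp, ih, hdf, pow_succ]
  have hG_ne : G ≠ 0 := hirr.ne_zero
  have hg_ne : g ≠ 0 := by
    rintro rfl
    exact hG_ne (by rw [hGdef, zero_comp])
  have hdg_pos : 0 < g.natDegree := by
    rcases Nat.eq_zero_or_pos g.natDegree with h0 | h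
    · exfalso
      have hgC : g = C (g.coeff 0) := eq_C_of_natDegree_eq_zero h0
      rw [hGdef, hgC, C_comp] at hirr
      exact not_irreducible_C _ hirr
    · exact h
  have hm_eq : m = g.natDegree * 3 ^ (n - 1) := by
    rw [hmdef, hGdef, natDegree_comp, hdeg_iter]
  have hm_pos : 0 < m := by
    rw [hm_eq]; positivity
  have hcompn : iterComp f n = (iterComp f (n - 1)).comp f := by
    conv_lhs => rw [show n = (n - 1) + 1 by omega]
    rfl
  have hP : g.comp (iterComp f n) = G.comp f := by
    rw [hcompn, hGdef, ← comp_assoc]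
  have hZeval : ∀ γ : K, G.eval (f.eval γ) = g.eval ((iterComp f n).eval γ) := by
    intro γ
    rw [hGdef, eval_comp, hcompn, eval_comp]
  -- the non-square element
  have hZ0 : (-3 : K) ^ g.natDegree * g.eval ((iterComp f n).eval γ₁)
      * g.eval ((iterComp f n).eval γ₂) ≠ 0 := by
    intro h
    exact hns (by rw [h]; exact ⟨0, by ring⟩)
  have hZpow : ((-3 : K) ^ g.natDegree * g.eval ((iterComp f n).eval γ₁)
      * g.eval ((iterComp f n).eval γ₂)) ^ (q / 2) = -1 := by
    rcases FiniteField.pow_dichotomy hchar2 hZ0 with h | h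
    · exact absurd ((FiniteField.isSquare_iff hchar2 hZ0).mpr h) hns
    · exact h
  -- the algebraic closure
  set ι := algebraMap K (AlgebraicClosure K) with hιdef
  have hι : Function.Injective ι := (algebraMap K (AlgebraicClosure K)).injective
  have hia : ι a ≠ 0 := fun h => ha (hι (by rw [h, map_zero]))
  have hι3 : ι 3 ≠ 0 := fun h => h3 (hι (by rw [h, map_zero]))
  -- a root of G
  have hGbar_ne : G.map ι ≠ 0 := fun h => hG_ne ((Polynomial.map_eq_zero_iff hι).mp h)
  have hGbar_deg : (G.map ι).natDegree = m := natDegree_map ι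
  obtain ⟨α, hα⟩ := IsAlgClosed.exists_root (G.map ι) (by
    rw [degree_eq_natDegree hGbar_ne, hGbar_deg]
    exact_mod_cast hm_pos.ne')
  have hα' : (G.map ι).eval α = 0 := hα
  have hαG : aeval α G = 0 := by rw [aeval_def, ← eval_map]; exact hα'
  have hαint : IsIntegral K α := IsAlgebraic.isIntegral ⟨G, hG_ne, hαG⟩
  have hminα : (minpoly K α).natDegree = m := by
    have hmin := minpoly.eq_of_irreducible hirr hαG
    have hlcne : (C G.leadingCoeff⁻¹) ≠ 0 := by
      rw [Ne, C_eq_zero, inv_eq_zero, leadingCoeff_eq_zero]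
      exact hG_ne
    rw [← hmin, natDegree_mul hG_ne hlcne, natDegree_C, add_zero]
  have hαfix : ∀ j : ℕ, α ^ q ^ j = α ↔ m ∣ j := by
    intro j
    rw [hqdef]
    rw [aux_pow_iff hαint j, hminα]
  -- Frobenius setup
  obtain ⟨p, hpK⟩ := CharP.exists K
  haveI := hpK
  have hpp : p.Prime := CharP.char_is_prime K p
  obtain ⟨s, -, hqs⟩ := FiniteField.card K p
  haveI : CharP (AlgebraicClosure K) p := charP_of_injective_algebraMap hι p
  haveI : ExpChar (AlgebraicClosure K) p := ExpChar.prime hpp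
  have hΦ : ∀ (i : ℕ) (y : AlgebraicClosure K),
      iterateFrobenius (AlgebraicClosure K) p (s * i) y = y ^ q ^ i := by
    intro i y
    rw [iterateFrobenius_def, hqdef, hqs, ← pow_mul]
  have hfrob_map : ∀ (i : ℕ) (x : K), (ι x) ^ q ^ i = ι x := by
    intro i x
    rw [hqdef, ← map_pow, FiniteField.pow_card_pow]
  have hfrob_sub : ∀ (i : ℕ) (x y : AlgebraicClosure K),
      (x - y) ^ q ^ i = x ^ q ^ i - y ^ q ^ i := by
    intro i x y
    have := map_sub (iterateFrobenius (AlgebraicClosure K) p (s * i)) x y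
    rwa [hΦ, hΦ, hΦ] at this
  -- all conjugates of α are roots of G
  have hGroot : ∀ i : ℕ, (G.map ι).eval (α ^ q ^ i) = 0 := by
    intro i
    have hcomp : (iterateFrobenius (AlgebraicClosure K) p (s * i)).comp ι = ι := by
      ext x
      show iterateFrobenius (AlgebraicClosure K) p (s * i) (ι x) = ι x
      rw [hΦ, hfrob_map]
    have h1 := Polynomial.hom_eval₂ G ι (iterateFrobenius (AlgebraicClosure K) p (s * i)) α
    rw [hcomp, hΦ, hΦ] at h1
    rw [eval_map, ← h1, ← eval_map, hα']
    exact zero_pow (Nat.pow_pos (show 0 < q by omega)).ne'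
  -- the conjugates are distinct
  have hαs_ne : ∀ i j : ℕ, i < j → j < m → α ^ q ^ i ≠ α ^ q ^ j := by
    intro i j hij hjm hne
    have h1 : (α ^ q ^ i) ^ q ^ (m - j) = (α ^ q ^ j) ^ q ^ (m - j) := by rw [hne]
    rw [← pow_mul, ← pow_mul, ← pow_add, ← pow_add] at h1
    have hjm' : j + (m - j) = m := by omega
    rw [hjm'] at h1
    have h2 : α ^ q ^ m = α := (hαfix m).mpr dvd_rfl
    rw [h2] at h1
    have h3 := (hαfix (i + (m - j))).mp h1
    have h4 : 0 < i + (m - j) := by omega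
    have h5 : i + (m - j) < m := by omega
    have := Nat.le_of_dvd h4 h3
    omega
  -- factorization of G over the closure
  have hGlc : ι G.leadingCoeff ≠ 0 :=
    fun h => hG_ne (leadingCoeff_eq_zero.mp (hι (by rw [h, map_zero])))
  have hGev : ∀ x : AlgebraicClosure K,
      (G.map ι).eval x = ι G.leadingCoeff * ∏ i ∈ Finset.range m, (x - α ^ q ^ i) := by
    set Pm : Polynomial (AlgebraicClosure K) :=
      ∏ i ∈ Finset.range m, (X - C (α ^ q ^ i)) with hPmdef
    have hPm_monic : Pm.Monic := monic_prod_of_monic _ _ fun i _ => monic_X_sub_C _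
    have hPm_deg : Pm.natDegree = m := by
      rw [hPmdef, natDegree_prod _ _ fun i _ => X_sub_C_ne_zero _]
      simp only [natDegree_X_sub_C, Finset.sum_const, Finset.card_range, smul_eq_mul, mul_one]
    have hlcmap : (G.map ι).leadingCoeff = ι G.leadingCoeff := leadingCoeff_map ι
    set Gm : Polynomial (AlgebraicClosure K) := G.map ι * C (G.map ι).leadingCoeff⁻¹ with hGmdef
    have hGm_monic : Gm.Monic := monic_mul_leadingCoeff_inv hGbar_ne
    have hGm_deg : Gm.natDegree = m := by
      rw [hGmdef, natDegree_mul hGbar_ne, natDegree_C, add_zero, hGbar_deg]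
      rw [Ne, C_eq_zero, inv_eq_zero, leadingCoeff_eq_zero]
      exact hGbar_ne
    have hGmPm : Gm = Pm := by
      by_cases hD : Gm - Pm = 0
      · rw [← sub_eq_zero]; exact hD
      · exfalso
        have hdlt : (Gm - Pm).natDegree < m := by
          have hdeg_eq : Gm.degree = Pm.degree := by
            rw [degree_eq_natDegree hGm_monic.ne_zero, degree_eq_natDegree hPm_monic.ne_zero,
              hGm_deg, hPm_deg]
          have hlt := degree_sub_lt hdeg_eq hGm_monic.ne_zero
            (by rw [Monic.leadingCoeff hGm_monic, Monic.leadingCoeff hPm_monic])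
          rw [natDegree_lt_iff_degree_lt hD]
          rw [degree_eq_natDegree hGm_monic.ne_zero, hGm_deg] at hlt
          exact hlt
        have hev : ∀ i : Fin m, (Gm - Pm).eval (α ^ q ^ (i : ℕ)) = 0 := by
          intro i
          rw [eval_sub, hGmdef, eval_mul, eval_C, hGroot, zero_mul, hPmdef, eval_prod]
          rw [zero_sub, neg_eq_zero]
          apply Finset.prod_eq_zero (Finset.mem_range.mpr i.2)
          simp
        have hinj : Function.Injective fun i : Fin m => α ^ q ^ (i : ℕ) := by
          intro i j hij
          by_contra hne
          have hij' : (i : ℕ) ≠ (j : ℕ) := fun h => hne (Fin.ext h)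
          rcases Nat.lt_or_ge (i : ℕ) (j : ℕ) with h | h
          · exact hαs_ne i j h j.2 hij
          · exact hαs_ne j i (by omega) i.2 hij.symm
        exact hD (Polynomial.eq_zero_of_natDegree_lt_card_of_eval_eq_zero (Gm - Pm) hinj hev
          (by rw [Fintype.card_fin]; exact hdlt))
    have hmap_eq : G.map ι = C (ι G.leadingCoeff) * Pm := by
      calc G.map ι = G.map ι * (C (G.map ι).leadingCoeff⁻¹ * C (G.map ι).leadingCoeff) := by
            rw [← C_mul, inv_mul_cancel₀ (by rw [hlcmap]; exact hGlc), C_1, mul_one]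
        _ = Gm * C (G.map ι).leadingCoeff := by rw [hGmdef]; ring
        _ = C (ι G.leadingCoeff) * Pm := by rw [hGmPm, hlcmap]; ring
    intro x
    rw [hmap_eq, eval_mul, eval_C, hPmdef, eval_prod]
    simp only [eval_sub, eval_X, eval_C]
  -- the cubic over the closure
  set fbar := f.map ι - C α with hfbardef
  have hfmap : f.map ι = C (ι a) * X ^ 3 + C (ι b) * X ^ 2 + C (ι c) * X + C (ι d) := by
    rw [hf]
    simp only [Polynomial.map_add, Polynomial.map_mul, Polynomial.map_pow, map_C, map_X]
  have hfbar_deg : fbar.natDegree = 3 := by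
    rw [hfbardef, natDegree_sub_eq_left_of_natDegree_lt, natDegree_map, hdf]
    rw [natDegree_map, hdf, natDegree_C]
    omega
  have hfbar_ne : fbar ≠ 0 := by
    intro h
    rw [h, natDegree_zero] at hfbar_deg
    omega
  have hfbar_lc : fbar.leadingCoeff = ι a := by
    have hco : f.coeff 3 = a := by
      rw [hf]
      simp [coeff_add, coeff_C_mul, coeff_X_pow, coeff_C, coeff_X]
    rw [leadingCoeff, hfbar_deg, hfbardef, coeff_sub, coeff_map, hco, coeff_C]
    norm_num
  have hsplit := IsAlgClosed.splits (k := AlgebraicClosure K) fbar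
  have hroots_card : Multiset.card fbar.roots = 3 := by
    rw [splits_iff_card_roots.mp hsplit, hfbar_deg]
  obtain ⟨u, v, w, huvw⟩ := Multiset.card_eq_three.mp hroots_card
  have hfact : fbar = C (ι a) * ((X - C u) * (X - C v) * (X - C w)) := by
    have h := hsplit.eq_prod_roots
    rw [huvw, hfbar_lc] at h
    rw [h]
    simp only [Multiset.insert_eq_cons, Multiset.map_cons, Multiset.map_singleton,
      Multiset.prod_cons, Multiset.prod_singleton]
    ring
  have hu_root : (f.map ι).eval u = α := by
    have hmem : u ∈ fbar.roots := by rw [huvw]; simp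
    have := (mem_roots hfbar_ne).mp hmem
    rw [IsRoot.def, hfbardef, eval_sub, eval_C, sub_eq_zero] at this
    exact this
  have hv_root : (f.map ι).eval v = α := by
    have hmem : v ∈ fbar.roots := by rw [huvw]; simp
    have := (mem_roots hfbar_ne).mp hmem
    rw [IsRoot.def, hfbardef, eval_sub, eval_C, sub_eq_zero] at this
    exact this
  have hw_root : (f.map ι).eval w = α := by
    have hmem : w ∈ fbar.roots := by rw [huvw]; simp
    have := (mem_roots hfbar_ne).mp hmem
    rw [IsRoot.def, hfbardef, eval_sub, eval_C, sub_eq_zero] at this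
    exact this
  -- coefficient relations over the closure
  have hfact2 : fbar = C (ι a) * X ^ 3 + C (-(ι a) * (u + v + w)) * X ^ 2
      + C (ι a * (u * v + u * w + v * w)) * X + C (-(ι a) * (u * v * w)) := by
    rw [hfact]
    simp only [C_mul, C_add, C_neg]
    ring
  have hcc : C (ι a) * X ^ 3 + C (ι b) * X ^ 2 + C (ι c) * X + C (ι d) - C α
      = C (ι a) * X ^ 3 + C (-(ι a) * (u + v + w)) * X ^ 2
      + C (ι a * (u * v + u * w + v * w)) * X + C (-(ι a) * (u * v * w)) := by
    rw [← hfmap, ← hfbardef]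
    exact hfact2
  have hc2 : ι b = -(ι a) * (u + v + w) := by
    have h := congrArg (fun P => Polynomial.coeff P 2) hcc
    simp only [coeff_add, coeff_sub, coeff_C_mul, coeff_X_pow, coeff_C, coeff_X] at h
    norm_num at h
    linear_combination h
  have hc1 : ι c = ι a * (u * v + u * w + v * w) := by
    have h := congrArg (fun P => Polynomial.coeff P 1) hcc
    simp only [coeff_add, coeff_sub, coeff_C_mul, coeff_X_pow, coeff_C, coeff_X] at h
    norm_num at h
    linear_combination h
  -- coefficient relations over K from the critical points
  have hder : f.derivative = C (3 * a) * X ^ 2 + C (2 * b) * X + C c := by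
    rw [hf]
    simp only [derivative_add, derivative_mul, derivative_C, derivative_X_pow, derivative_X,
      Nat.cast_ofNat, C_mul, C_add]
    ring
  have hcrit2 : C (3 * a) * X ^ 2 + C (2 * b) * X + C c
      = C (3 * a) * X ^ 2 + C (-(3 * a) * (γ₁ + γ₂)) * X + C ((3 * a) * (γ₁ * γ₂)) := by
    rw [← hder, hcrit]
    simp only [C_mul, C_add, C_neg]
    ring
  have hk1 : 2 * b = -(3 * a) * (γ₁ + γ₂) := by
    have h := congrArg (fun P => Polynomial.coeff P 1) hcrit2
    simp only [coeff_add, coeff_C_mul, coeff_X_pow, coeff_C, coeff_X] at h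
    norm_num at h
    linear_combination h
  have hk0 : c = 3 * a * (γ₁ * γ₂) := by
    have h := congrArg (fun P => Polynomial.coeff P 0) hcrit2
    simp only [coeff_add, coeff_C_mul, coeff_X_pow, coeff_C, coeff_X] at h
    norm_num at h
    linear_combination h
  -- symmetric function relations
  have hE1 : 3 * ι γ₁ + 3 * ι γ₂ = 2 * (u + v + w) := by
    have h1 : ι (2 * b) = ι (-(3 * a) * (γ₁ + γ₂)) := congrArg ι hk1
    simp only [map_mul, map_add, map_neg, map_ofNat] at h1
    have h3 : (3 * ι γ₁ + 3 * ι γ₂) * ι a = (2 * (u + v + w)) * ι a := by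
      linear_combination h1 - 2 * hc2
    exact mul_right_cancel₀ hia h3
  have hE2 : 3 * (ι γ₁ * ι γ₂) = u * v + u * w + v * w := by
    have h1 : ι c = ι (3 * a * (γ₁ * γ₂)) := congrArg ι hk0
    simp only [map_mul, map_ofNat] at h1
    have h3 : (3 * (ι γ₁ * ι γ₂)) * ι a = (u * v + u * w + v * w) * ι a := by
      linear_combination hc1 - h1
    exact mul_right_cancel₀ hia h3
  have hE := disc_identity (ι γ₁) (ι γ₂) u v w hE1 hE2
  -- evaluation of the cubic at the critical points
  have hAev : ∀ γ : K, ι (f.eval γ) - α = ι a * ((ι γ - u) * (ι γ - v) * (ι γ - w)) := by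
    intro γ
    have h1 : fbar.eval (ι γ) = ι (f.eval γ) - α := by
      rw [hfbardef, eval_sub, eval_C, eval_map, eval₂_at_apply]
    have h2 : fbar.eval (ι γ) = ι a * ((ι γ - u) * (ι γ - v) * (ι γ - w)) := by
      rw [hfact]
      simp only [eval_mul, eval_sub, eval_C, eval_X]
    rw [← h1, h2]
  have hι33 : ι (-3 : K) = (-3 : AlgebraicClosure K) := by rw [map_neg, map_ofNat]
  have h3c : (3 : AlgebraicClosure K) ≠ 0 := by rw [← map_ofNat ι 3]; exact hι3
  -- the square root of the discriminant-like element
  have ht2 : (ι a * ((u - v) * (u - w) * (v - w)) / 3) ^ 2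
      = (-3 : AlgebraicClosure K) * (ι (f.eval γ₁) - α) * (ι (f.eval γ₂) - α) := by
    rw [hAev, hAev, div_pow, div_eq_iff (pow_ne_zero 2 h3c)]
    linear_combination (ι a ^ 2) * hE
  -- Frobenius powers of the discriminant-like element
  have hδi : ∀ i : ℕ, ((-3 : AlgebraicClosure K) * (ι (f.eval γ₁) - α) * (ι (f.eval γ₂) - α)) ^ q ^ i
      = (-3 : AlgebraicClosure K) * (ι (f.eval γ₁) - α ^ q ^ i) * (ι (f.eval γ₂) - α ^ q ^ i) := by
    intro i
    rw [mul_pow, mul_pow, ← hι33, hfrob_map i ((-3 : K)), hfrob_sub i (ι (f.eval γ₁)) α,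
      hfrob_sub i (ι (f.eval γ₂)) α, hfrob_map i (f.eval γ₁), hfrob_map i (f.eval γ₂)]
  have hprodγ : ∀ γ : K, ∏ i ∈ Finset.range m, (ι (f.eval γ) - α ^ q ^ i)
      = ι (G.eval (f.eval γ) * G.leadingCoeff⁻¹) := by
    intro γ
    have h1 := hGev (ι (f.eval γ))
    have h2 : (G.map ι).eval (ι (f.eval γ)) = ι (G.eval (f.eval γ)) := by
      rw [eval_map, eval₂_at_apply]
    rw [h2] at h1
    rw [map_mul, map_inv₀, h1, mul_comm (ι G.leadingCoeff) _, mul_inv_cancel_right₀ hGlc]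
  have hprodδ : ((-3 : AlgebraicClosure K) * (ι (f.eval γ₁) - α) * (ι (f.eval γ₂) - α))
        ^ (∑ i ∈ Finset.range m, q ^ i)
      = ι ((-3 : K) ^ m * (G.eval (f.eval γ₁) * G.leadingCoeff⁻¹)
          * (G.eval (f.eval γ₂) * G.leadingCoeff⁻¹)) := by
    rw [← Finset.prod_pow_eq_pow_sum]
    have hcongr : ∀ i ∈ Finset.range m,
        ((-3 : AlgebraicClosure K) * (ι (f.eval γ₁) - α) * (ι (f.eval γ₂) - α)) ^ q ^ i
        = (-3 : AlgebraicClosure K) * (ι (f.eval γ₁) - α ^ q ^ i) * (ι (f.eval γ₂) - α ^ q ^ i) :=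
      fun i _ => hδi i
    have hsplit' : ι ((-3 : K) ^ m * (G.eval (f.eval γ₁) * G.leadingCoeff⁻¹)
          * (G.eval (f.eval γ₂) * G.leadingCoeff⁻¹))
        = (-3 : AlgebraicClosure K) ^ m * ι (G.eval (f.eval γ₁) * G.leadingCoeff⁻¹)
          * ι (G.eval (f.eval γ₂) * G.leadingCoeff⁻¹) := by
      rw [map_mul, map_mul, map_pow, hι33]
    rw [Finset.prod_congr rfl hcongr, Finset.prod_mul_distrib, Finset.prod_mul_distrib,
      Finset.prod_const, Finset.card_range, hprodγ γ₁, hprodγ γ₂, hsplit']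
  -- power computation in K
  obtain ⟨t3, ht3⟩ : ∃ t3, 3 ^ (n - 1) = 2 * t3 + 1 := by
    have : Odd ((3 : ℕ) ^ (n - 1)) := Odd.pow ⟨1, by norm_num⟩
    obtain ⟨t3, ht3⟩ := this
    exact ⟨t3, by omega⟩
  have hGlcK : G.leadingCoeff ≠ 0 := leadingCoeff_ne_zero.mpr hG_ne
  have hZ'eq : ((-3 : K) ^ m * (G.eval (f.eval γ₁) * G.leadingCoeff⁻¹)
        * (G.eval (f.eval γ₂) * G.leadingCoeff⁻¹))
      = ((-3 : K) ^ g.natDegree * g.eval ((iterComp f n).eval γ₁) * g.eval ((iterComp f n).eval γ₂))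
        * ((-3 : K) ^ (g.natDegree * t3) * G.leadingCoeff⁻¹) ^ 2 := by
    rw [← hZeval γ₁, ← hZeval γ₂, hm_eq, ht3,
      show g.natDegree * (2 * t3 + 1) = g.natDegree + g.natDegree * t3 * 2 by ring,
      pow_add, pow_mul]
    ring
  have hy0 : ((-3 : K) ^ (g.natDegree * t3) * G.leadingCoeff⁻¹) ≠ 0 :=
    mul_ne_zero (pow_ne_zero _ h3') (inv_ne_zero hGlcK)
  have hZ'pow : ((-3 : K) ^ m * (G.eval (f.eval γ₁) * G.leadingCoeff⁻¹)
        * (G.eval (f.eval γ₂) * G.leadingCoeff⁻¹)) ^ (q / 2) = -1 := by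
    rw [hZ'eq, mul_pow, hZpow, ← pow_mul, show 2 * (q / 2) = q - 1 by omega, hqdef,
      FiniteField.pow_card_sub_one_eq_one _ hy0, mul_one]
  -- the key power identity
  set Sm := ∑ i ∈ Finset.range m, q ^ i with hSdef
  have hSpos : 0 < Sm := by
    rw [hSdef]
    apply Finset.sum_pos (fun i _ => pow_pos (by omega) i)
    exact Finset.nonempty_range_iff.mpr (by omega)
  have hδpow : ((-3 : AlgebraicClosure K) * (ι (f.eval γ₁) - α) * (ι (f.eval γ₂) - α))
      ^ (Sm * (q / 2)) = -1 := by
    rw [pow_mul, hprodδ, ← map_pow, hZ'pow, map_neg, map_one]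
  have hexp0 : Sm * (q / 2) ≠ 0 := Nat.mul_ne_zero (by omega) (by omega)
  have hδ0 : ((-3 : AlgebraicClosure K) * (ι (f.eval γ₁) - α) * (ι (f.eval γ₂) - α)) ≠ 0 := by
    intro h
    rw [h, zero_pow hexp0] at hδpow
    exact absurd hδpow (by norm_num)
  have ht0 : (ι a * ((u - v) * (u - w) * (v - w)) / 3) ≠ 0 := by
    intro h
    apply hδ0
    rw [← ht2, h]
    norm_num
  have hε0 : ((u - v) * (u - w) * (v - w)) ≠ 0 := by
    intro h
    apply ht0
    rw [h, mul_zero, zero_div]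
  have huv : u ≠ v := fun h => hε0 (by rw [h]; ring)
  have huw : u ≠ w := fun h => hε0 (by rw [h]; ring)
  have hvw : v ≠ w := fun h => hε0 (by rw [h]; ring)
  -- q^m = 2*(Sm*(q/2)) + 1
  have hgeom := aux_geom q (by omega) m
  have hqm : q ^ m = 2 * (Sm * (q / 2)) + 1 := by
    have h2q : 2 * (q / 2) = q - 1 := by omega
    calc q ^ m = 1 + (q - 1) * Sm := by rw [hgeom]
      _ = 2 * (Sm * (q / 2)) + 1 := by rw [← h2q]; ring
  -- Frobenius action on t and the roots
  have ht_frob : (ι a * ((u - v) * (u - w) * (v - w)) / 3) ^ q ^ m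
      = -(ι a * ((u - v) * (u - w) * (v - w)) / 3) := by
    rw [hqm, pow_succ, pow_mul, ht2, hδpow, neg_one_mul]
  have hε_frob : ((u - v) * (u - w) * (v - w)) ^ q ^ m = -((u - v) * (u - w) * (v - w)) := by
    have hεt : ((u - v) * (u - w) * (v - w))
        = (ι a * ((u - v) * (u - w) * (v - w)) / 3) * 3 / ι a := by
      rw [div_mul_cancel₀ _ h3c, mul_div_cancel_left₀ _ hia]
    rw [hεt, div_pow, mul_pow, ht_frob, hfrob_map m a, ← map_ofNat ι 3, hfrob_map m (3 : K),
      map_ofNat, neg_mul, neg_div, ← hεt]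
  -- the Frobenius homomorphism of degree m
  set Φm := iterateFrobenius (AlgebraicClosure K) p (s * m) with hΦmdef
  have hΦm : ∀ y, Φm y = y ^ q ^ m := hΦ m
  have hΦminj : Function.Injective Φm := Φm.injective
  have hΦmι : ∀ x : K, Φm (ι x) = ι x := fun x => by rw [hΦm, hfrob_map]
  have hΦmα : Φm α = α := by rw [hΦm]; exact (hαfix m).mpr dvd_rfl
  have hroot_frob : ∀ x, (f.map ι).eval x = α → (f.map ι).eval (Φm x) = α := by
    intro x hx
    have h1 := congrArg Φm hx
    rw [hΦmα] at h1
    rw [hfmap] at hx h1 ⊢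
    simp only [eval_add, eval_mul, eval_pow, eval_C, eval_X] at hx h1 ⊢
    rw [map_add, map_add, map_add, map_mul, map_mul, map_mul, map_pow, map_pow,
      hΦmι a, hΦmι b, hΦmι c, hΦmι d] at h1
    exact h1
  have hmem : ∀ x, (f.map ι).eval x = α → (Φm x = u ∨ Φm x = v ∨ Φm x = w) := by
    intro x hx
    have h1 : fbar.eval (Φm x) = 0 := by
      rw [hfbardef, eval_sub, eval_C, hroot_frob x hx, sub_self]
    rw [hfact] at h1
    simp only [eval_mul, eval_sub, eval_C, eval_X] at h1
    rcases mul_eq_zero.mp h1 with h' | h'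
    · exact absurd h' hia
    · rcases mul_eq_zero.mp h' with h'' | h''
      · rcases mul_eq_zero.mp h'' with h3' | h3'
        · exact Or.inl (sub_eq_zero.mp h3')
        · exact Or.inr (Or.inl (sub_eq_zero.mp h3'))
      · exact Or.inr (Or.inr (sub_eq_zero.mp h''))
  -- ε is sent to -ε by the Frobenius
  have hεeq : (Φm u - Φm v) * (Φm u - Φm w) * (Φm v - Φm w)
      = -((u - v) * (u - w) * (v - w)) := by
    rw [← map_sub Φm u v, ← map_sub Φm u w, ← map_sub Φm v w, ← map_mul, ← map_mul, hΦm]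
    exact hε_frob
  have hflip : ∀ x : AlgebraicClosure K, x = -x → x = 0 := by
    intro x hx
    have h2c : (2 : AlgebraicClosure K) ≠ 0 := by
      rw [← map_ofNat ι 2]
      exact fun h => h2 (hι (by rw [h, map_zero]))
    have : 2 * x = 0 := by linear_combination hx
    rcases mul_eq_zero.mp this with h | h
    · exact absurd h h2c
    · exact h
  -- case analysis on the permutation induced by the Frobenius
  have hkey : ∃ r s1 s2 : AlgebraicClosure K,
      (f.map ι).eval r = α ∧ (f.map ι).eval s1 = α ∧ Φm r = r ∧ Φm s1 = s2 ∧ Φm s2 = s1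
      ∧ s1 ≠ s2 := by
    have case_u := hmem u hu_root
    have case_v := hmem v hv_root
    have case_w := hmem w hw_root
    rcases case_u with h1 | h1 | h1 <;> rcases case_v with h2 | h2 | h2 <;>
      rcases case_w with h3 | h3 | h3 <;> rw [h1, h2, h3] at hεeq <;>
      first
      | exact absurd (hΦminj (h1.trans h2.symm)) huv
      | exact absurd (hΦminj (h1.trans h3.symm)) huw
      | exact absurd (hΦminj (h2.trans h3.symm)) hvw
      | exact absurd (hflip _ (by linear_combination hεeq)) hε0
      | exact ⟨u, v, w, hu_root, hv_root, h1, h2, h3, hvw⟩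
      | exact ⟨v, u, w, hv_root, hu_root, h2, h1, h3, huw⟩
      | exact ⟨w, u, v, hw_root, hu_root, h3, h1, h2, huv⟩
  obtain ⟨r, s1, s2, hr_root, hs_root, hrfix, hs12, hs21, hs_ne⟩ := hkey
  -- the endgame: minimal polynomials of r and s1
  have hcomp_deg : (G.comp f).natDegree = 3 * m := by
    rw [natDegree_comp, hdf]
    ring
  have hPfne : G.comp f ≠ 0 := by
    intro h
    rw [h, natDegree_zero] at hcomp_deg
    omega
  have haeval : ∀ x, (f.map ι).eval x = α → aeval x (G.comp f) = 0 := by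
    intro x hx
    rw [aeval_comp]
    have hfx : aeval x f = α := by rw [aeval_def, ← eval_map]; exact hx
    rw [hfx]
    exact hαG
  have hrint : IsIntegral K r := IsAlgebraic.isIntegral ⟨G.comp f, hPfne, haeval r hr_root⟩
  have hsint : IsIntegral K s1 := IsAlgebraic.isIntegral ⟨G.comp f, hPfne, haeval s1 hs_root⟩
  have hαmem : ∀ x, (f.map ι).eval x = α → α ∈ IntermediateField.adjoin K {x} := by
    intro x hx
    rw [← hx, hfmap]
    simp only [eval_add, eval_mul, eval_pow, eval_C, eval_X]
    have hxmem := IntermediateField.mem_adjoin_simple_self K x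
    exact add_mem (add_mem (add_mem
      (mul_mem (IntermediateField.algebraMap_mem _ a) (pow_mem hxmem 3))
      (mul_mem (IntermediateField.algebraMap_mem _ b) (pow_mem hxmem 2)))
      (mul_mem (IntermediateField.algebraMap_mem _ c) hxmem))
      (IntermediateField.algebraMap_mem _ d)
  have hrdeg : (minpoly K r).natDegree = m := by
    have h1 : (minpoly K r).natDegree ≤ m := by
      apply aux_deg_le (j := m) hrint (by omega)
      rw [← hqdef, ← hΦm]
      exact hrfix
    have h2 : m ∣ (minpoly K r).natDegree := by
      apply (hαfix _).mp
      rw [hqdef]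
      exact aux_pow_mem hrint (hαmem r hr_root)
    have h3 : 0 < (minpoly K r).natDegree := minpoly.natDegree_pos hrint
    exact le_antisymm h1 (Nat.le_of_dvd h3 h2)
  have hs2m : s1 ^ q ^ (2 * m) = s1 := by
    have h1 : Φm (Φm s1) = s1 := by rw [hs12, hs21]
    rw [hΦm, hΦm, ← pow_mul, ← pow_add] at h1
    rw [show 2 * m = m + m by ring]
    exact h1
  have hsdeg : (minpoly K s1).natDegree = 2 * m := by
    have h1 : (minpoly K s1).natDegree ≤ 2 * m := by
      apply aux_deg_le (j := 2 * m) hsint (by omega)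
      rw [← hqdef]
      exact hs2m
    have h2 : m ∣ (minpoly K s1).natDegree := by
      apply (hαfix _).mp
      rw [hqdef]
      exact aux_pow_mem hsint (hαmem s1 hs_root)
    have h3 : 0 < (minpoly K s1).natDegree := minpoly.natDegree_pos hsint
    have h4 : (minpoly K s1).natDegree ≠ m := by
      intro h
      have h5 := aux_pow_mem hsint (IntermediateField.mem_adjoin_simple_self K s1)
      rw [h, ← hqdef, ← hΦm] at h5
      exact hs_ne ((h5.symm.trans hs12))
    obtain ⟨k, hk⟩ := h2
    have hkle : k ≤ 2 := by
      by_contra hgt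
      push_neg at hgt
      have hmul : 3 * m ≤ m * k := by
        calc 3 * m = m * 3 := by ring
          _ ≤ m * k := Nat.mul_le_mul_left m (by omega)
      omega
    interval_cases k
    · omega
    · exact absurd (by omega : (minpoly K s1).natDegree = m) h4
    · omega
  -- assembling the two factors
  have hdvd1 : minpoly K r ∣ G.comp f := minpoly.dvd K r (haeval r hr_root)
  have hdvd2 : minpoly K s1 ∣ G.comp f := minpoly.dvd K s1 (haeval s1 hs_root)
  have hne12 : minpoly K r ≠ minpoly K s1 := by
    intro h
    rw [h, hsdeg] at hrdeg
    omega
  have hcop : IsCoprime (minpoly K r) (minpoly K s1) := by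
    rw [(minpoly.irreducible hrint).coprime_iff_not_dvd]
    intro hdvd
    exact hne12 (eq_of_monic_of_associated (minpoly.monic hrint) (minpoly.monic hsint)
      ((minpoly.irreducible hrint).associated_of_dvd (minpoly.irreducible hsint) hdvd))
  obtain ⟨T, hT⟩ := (hcop.mul_dvd hdvd1 hdvd2 : minpoly K r * minpoly K s1 ∣ G.comp f)
  have hM1ne : minpoly K r ≠ 0 := (minpoly.monic hrint).ne_zero
  have hM2ne : minpoly K s1 ≠ 0 := (minpoly.monic hsint).ne_zero
  have hTne : T ≠ 0 := by
    rintro rfl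
    rw [mul_zero] at hT
    exact hPfne hT
  have hTdeg : T.natDegree = 0 := by
    have h := congrArg natDegree hT
    rw [hcomp_deg, natDegree_mul (mul_ne_zero hM1ne hM2ne) hTne,
      natDegree_mul hM1ne hM2ne, hrdeg, hsdeg] at h
    omega
  have hTC : T = C (T.coeff 0) := eq_C_of_natDegree_eq_zero hTdeg
  have hT0 : T.coeff 0 ≠ 0 := by
    intro h
    apply hTne
    rw [hTC, h, map_zero]
  refine ⟨C (T.coeff 0) * minpoly K r, minpoly K s1, ?_, minpoly.irreducible hsint, ?_, ?_, ?_⟩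
  · exact (irreducible_isUnit_mul (isUnit_C.mpr hT0.isUnit)).mpr (minpoly.irreducible hrint)
  · rw [hP, hT]
    conv_lhs => rw [hTC]
    ring
  · rw [natDegree_C_mul hT0, hrdeg]
  · rw [hsdeg]
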